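/- arXiv:1405.6616 — 2 statements merged into one kernel-verified Lean document; each statement's English description precedes it below -/
import Mathlib

section
/- Let G = A ⋊ V where A is a finite abelian group and V is an elementary abelian p-group. Then every irreducible complex character of G occurs with multiplicity exactly 1 in the permutation character C[G/H] for a suitable subgroup H ≤ G. -/
open scoped BigOperators
open Classical

variable {G : Type} [Group G] [Fintype G]

/-- The permutation character of `G` acting on `G ⧸ H`. -/
noncomputable def permChar (H : Subgroup G) : G → ℂ :=
  fun g => (Fintype.card {x : G ⧸ H // g • x = x} : ℂ)

/-- Inner product of class functions on a finite group. -/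
noncomputable def innerChar (f₁ f₂ : G → ℂ) : ℂ :=
  (Fintype.card G : ℂ)⁻¹ * ∑ g : G, f₁ g * (starRingEnd ℂ) (f₂ g)

/-- `τ` is the character of an irreducible complex representation of `G`. -/
def IsIrredChar (τ : G → ℂ) : Prop :=
  ∃ V : FDRep ℂ G, CategoryTheory.Simple V ∧ τ = V.character

section Auxiliary

open CategoryTheory
open scoped Pointwise

set_option linter.unusedSectionVars false
set_option linter.unusedVariables false

lemma innerChar_permChar (H : Subgroup G) (τ : G → ℂ)
    (hconj : ∀ x g : G, τ (x * g * x⁻¹) = τ g) :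
    innerChar τ (permChar H) = (Fintype.card H : ℂ)⁻¹ * ∑ h : H, τ h := by
  have hfix : ∀ g : G, permChar H g = ∑ x : G ⧸ H, (if g • x = x then (1:ℂ) else 0) := by
    intro g
    rw [permChar]
    rw [Fintype.card_subtype]
    push_cast [Finset.card_filter]
    rfl
  have hinner : ∀ x : G ⧸ H, (∑ g : G, if g • x = x then τ g else 0) = ∑ h : H, τ h := by
    intro x
    induction x using QuotientGroup.induction_on with
    | H z =>
      have hcond : ∀ g : G, g • (z : G ⧸ H) = (z : G ⧸ H) ↔ z⁻¹ * g * z ∈ H := by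
        intro g
        change ((g * z : G) : G ⧸ H) = (z : G ⧸ H) ↔ _
        rw [QuotientGroup.eq]
        have hh : (g * z)⁻¹ * z = (z⁻¹ * g * z)⁻¹ := by group
        rw [hh, inv_mem_iff]
      have e : ∀ g : G, (if g • (z : G ⧸ H) = (z : G ⧸ H) then τ g else 0)
          = (if z⁻¹ * g * z ∈ H then τ g else 0) := by
        intro g; exact if_congr (hcond g) rfl rfl
      rw [Finset.sum_congr rfl (fun g _ => e g)]
      rw [← Equiv.sum_comp (Equiv.mulRight z⁻¹ |>.trans (Equiv.mulLeft z))
        (fun g => if z⁻¹ * g * z ∈ H then τ g else 0)]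
      have : ∀ g : G, (if z⁻¹ * (z * (g * z⁻¹)) * z ∈ H then τ (z * (g * z⁻¹)) else 0)
          = (if g ∈ H then τ g else 0) := by
        intro g
        have h1 : z⁻¹ * (z * (g * z⁻¹)) * z = g := by group
        have h2 : z * (g * z⁻¹) = z * g * z⁻¹ := by group
        rw [h1, h2, hconj z g]
      simp only [Equiv.trans_apply, Equiv.coe_mulRight, Equiv.coe_mulLeft] at *
      trans ∑ g : G, (if g ∈ H then τ g else 0)
      · exact Finset.sum_congr rfl (fun g _ => this g)
      rw [← Finset.sum_filter]
      exact Finset.sum_subtype _ (by simp) (fun h => τ h)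
  have key : ∑ g : G, τ g * (starRingEnd ℂ) (permChar H g)
      = (Fintype.card (G ⧸ H) : ℂ) * ∑ h : H, τ h := by
    have : ∀ g : G, τ g * (starRingEnd ℂ) (permChar H g)
        = ∑ x : G ⧸ H, (if g • x = x then τ g else 0) := by
      intro g
      have h0 : τ g * (starRingEnd ℂ) (permChar H g) = τ g * permChar H g := by
        rw [permChar, map_natCast]
      rw [h0, hfix g, Finset.mul_sum]
      exact Finset.sum_congr rfl (fun x _ => by split <;> simp)
    rw [Finset.sum_congr rfl (fun g _ => this g), Finset.sum_comm]
    rw [Finset.sum_congr rfl (fun x _ => hinner x)]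
    simp [Finset.sum_const, Finset.card_univ]
  rw [innerChar, key]
  have hG : (Fintype.card G : ℂ) = (Fintype.card (G ⧸ H) : ℂ) * (Fintype.card H : ℂ) := by
    have hc := Subgroup.card_eq_card_quotient_mul_card_subgroup (s := H)
    simp only [Nat.card_eq_fintype_card] at hc
    rw [← Nat.cast_mul, ← hc]
  rw [hG]
  have h1 : (Fintype.card (G ⧸ H) : ℂ) ≠ 0 := by
    simp [Fintype.card_ne_zero]
  field_simp

lemma common_eigenvector {W : Type} [AddCommGroup W] [Module ℂ W] [FiniteDimensional ℂ W]
    (s : Finset G) (f : G → Module.End ℂ W)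
    (hcomm : ∀ g ∈ s, ∀ g' ∈ s, f g * f g' = f g' * f g)
    (p : Submodule ℂ W) (hp : p ≠ ⊥) (hinv : ∀ g ∈ s, ∀ x ∈ p, f g x ∈ p) :
    ∃ y ∈ p, y ≠ 0 ∧ ∀ g ∈ s, ∃ c : ℂ, f g y = c • y := by
  suffices h : ∀ s' : Finset G, s' ⊆ s → ∃ q : Submodule ℂ W, q ≤ p ∧ q ≠ ⊥ ∧
      (∀ g ∈ s, ∀ x ∈ q, f g x ∈ q) ∧ (∀ g ∈ s', ∃ c : ℂ, ∀ x ∈ q, f g x = c • x) by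
    obtain ⟨q, hqp, hqbot, _, heig⟩ := h s (le_refl s)
    obtain ⟨y, hy, hy0⟩ := Submodule.exists_mem_ne_zero_of_ne_bot hqbot
    exact ⟨y, hqp hy, hy0, fun g hg => by
      obtain ⟨c, hc⟩ := heig g hg
      exact ⟨c, hc y hy⟩⟩
  intro s'
  induction s' using Finset.induction_on with
  | empty =>
    intro _
    exact ⟨p, le_refl p, hp, hinv, by simp⟩
  | @insert a s' ha ih =>
    intro hsub
    have has : a ∈ s := hsub (Finset.mem_insert_self a s')
    have hs's : s' ⊆ s := fun x hx => hsub (Finset.mem_insert_of_mem hx)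
    obtain ⟨q, hqp, hqbot, hqinv, hqeig⟩ := ih hs's
    -- restrict f a to q
    have hmap : ∀ x ∈ q, f a x ∈ q := hqinv a has
    set F : Module.End ℂ q := (f a).restrict hmap with hF
    haveI : Nontrivial q := Submodule.nontrivial_iff_ne_bot.mpr hqbot
    obtain ⟨μ, hμ⟩ := Module.End.exists_eigenvalue F
    obtain ⟨v, hv⟩ := hμ.exists_hasEigenvector
    refine ⟨q ⊓ Module.End.eigenspace (f a) μ, inf_le_left.trans hqp, ?_, ?_, ?_⟩
    · rw [Submodule.ne_bot_iff]
      refine ⟨(v : W), Submodule.mem_inf.mpr ⟨v.2, ?_⟩, ?_⟩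
      · rw [Module.End.mem_eigenspace_iff]
        have h1 := hv.apply_eq_smul
        have h2 : ((F v : q) : W) = f a (v : W) := rfl
        rw [h1] at h2
        simpa using h2.symm
      · simpa using hv.2
    · intro g hg x hx
      obtain ⟨hx1, hx2⟩ := Submodule.mem_inf.mp hx
      refine Submodule.mem_inf.mpr ⟨hqinv g hg x hx1, ?_⟩
      rw [Module.End.mem_eigenspace_iff]
      have h1 : f a (f g x) = f g (f a x) := by
        have hco := hcomm a has g hg
        calc f a (f g x) = (f a * f g) x := rfl
        _ = (f g * f a) x := by rw [hco]
        _ = f g (f a x) := rfl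
      rw [h1, (Module.End.mem_eigenspace_iff).mp hx2, map_smul]
    · intro g hg
      rcases Finset.mem_insert.mp hg with rfl | hg'
      · exact ⟨μ, fun x hx =>
          (Module.End.mem_eigenspace_iff).mp (Submodule.mem_inf.mp hx).2⟩
      · obtain ⟨c, hc⟩ := hqeig g hg'
        exact ⟨c, fun x hx => hc x (Submodule.mem_inf.mp hx).1⟩

lemma exists_complement (p : ℕ) (hp : p.Prime) (V : Subgroup G)
    (hVp : ∀ v ∈ V, v ^ p = 1)
    (hVab : ∀ v ∈ V, ∀ w ∈ V, v * w = w * v) (V₀ : Subgroup G) (hV₀ : V₀ ≤ V) :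
    ∃ U : Subgroup G, U ≤ V ∧ (∀ x, x ∈ U → x ∈ V₀ → x = 1) ∧
      (∀ v ∈ V, ∃ u ∈ U, ∃ w ∈ V₀, v = u * w) := by
  obtain ⟨n, rfl⟩ : ∃ n, p = n + 1 := ⟨p - 1, by have := hp.pos; omega⟩
  haveI : Fact (n+1).Prime := ⟨hp⟩
  letI : CommGroup ↥V :=
    { (inferInstance : Group ↥V) with
      mul_comm := fun a b => Subtype.ext (hVab a a.2 b b.2) }
  have hsmul : ∀ x : Additive ↥V, (n+1) • x = 0 := by
    intro x
    have : (x.toMul : ↥V) ^ (n+1) = 1 := Subtype.ext (by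
      push_cast
      exact hVp _ (x.toMul : ↥V).2)
    calc (n+1) • x = Additive.ofMul (x.toMul ^ (n+1)) := rfl
    _ = 0 := by rw [this]; rfl
  letI : Module (ZMod (n+1)) (Additive ↥V) := AddCommGroup.zmodModule hsmul
  set p₀ : Submodule (ZMod (n+1)) (Additive ↥V) :=
    AddSubgroup.toZModSubmodule (n+1) (Subgroup.toAddSubgroup (V₀.subgroupOf V)) with hp₀
  obtain ⟨q, hq⟩ := Submodule.exists_isCompl p₀
  set Uv : Subgroup ↥V := AddSubgroup.toSubgroup' (q.toAddSubgroup) with hUv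
  refine ⟨Subgroup.map V.subtype Uv, Subgroup.map_subtype_le Uv, ?_, ?_⟩
  · rintro x hx hxV₀
    obtain ⟨u, hu, rfl⟩ := hx
    have h1a : (Additive.ofMul u : Additive ↥V) ∈ p₀ := by
      show u ∈ V₀.subgroupOf V
      exact Subgroup.mem_subgroupOf.mpr hxV₀
    have h1b : (Additive.ofMul u : Additive ↥V) ∈ q := hu
    have h1 := Submodule.mem_inf.mpr ⟨h1a, h1b⟩
    rw [hq.inf_eq_bot] at h1
    have : u = 1 := by
      have := (Submodule.mem_bot _).mp h1
      exact Additive.ofMul.injective (by simpa using this)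
    rw [this]; rfl
  · intro v hv
    have hmem : (Additive.ofMul (⟨v, hv⟩ : ↥V) : Additive ↥V) ∈ p₀ ⊔ q := by
      rw [hq.sup_eq_top]
      exact Submodule.mem_top
    obtain ⟨y, hy, z, hz, hyz⟩ := Submodule.mem_sup.mp hmem
    have hv' : (y.toMul : ↥V) * z.toMul = (⟨v, hv⟩ : ↥V) := congrArg Additive.toMul hyz
    have hcoe : ((y.toMul : ↥V) : G) * ((z.toMul : ↥V) : G) = v := by
      simpa using congrArg Subtype.val hv'
    refine ⟨((z.toMul : ↥V) : G), ?_, ((y.toMul : ↥V) : G), ?_, ?_⟩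
    · exact ⟨z.toMul, hz, rfl⟩
    · have : (y.toMul : ↥V) ∈ V₀.subgroupOf V := hy
      exact (Subgroup.mem_subgroupOf).mp this
    · rw [← hcoe]
      exact hVab _ (y.toMul : ↥V).2 _ (z.toMul : ↥V).2

lemma simple_invariant_submodule (M : FDRep ℂ G) [CategoryTheory.Simple M]
    (q : Submodule ℂ M) (hinv : ∀ g : G, ∀ x ∈ q, M.ρ g x ∈ q) (hq : q ≠ ⊥) : q = ⊤ := by
  let ρq : Representation ℂ G q :=
    { toFun := fun g => (M.ρ g).restrict (hinv g)
      map_one' := by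
        ext x
        simp [LinearMap.restrict_apply]
      map_mul' := fun g h => by
        ext x
        simp [LinearMap.restrict_apply] }
  let N : FDRep ℂ G := FDRep.of ρq
  let ι : N ⟶ M := ⟨(ObjectProperty.homMk (ModuleCat.ofHom q.subtype) : N.V ⟶ M.V), by
    intro g
    ext x
    rfl⟩
  haveI : Mono ι := by
    apply Preadditive.mono_of_cancel_zero
    intro P f hf
    apply Action.Hom.ext
    have h1 : f.hom ≫ ι.hom = 0 := by
      rw [← Action.comp_hom, hf, Action.zero_hom]
    ext x
    have h2 : q.subtype (f.hom x) = 0 := congrArg (fun (l : P.V ⟶ M.V) => l.hom.hom x) h1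
    have h3 : f.hom x = 0 := Subtype.ext (by simpa using h2)
    exact congrArg Subtype.val h3
  have hι : ι ≠ 0 := by
    obtain ⟨x, hx, hx0⟩ := Submodule.exists_mem_ne_zero_of_ne_bot hq
    intro h0
    have hax : ι.hom (⟨x, hx⟩ : q) = x := rfl
    rw [h0] at hax
    have hax2 : (0 : (N.V →ₗ[ℂ] M.V)) ⟨x, hx⟩ = x := by
      exact hax
    rw [LinearMap.zero_apply] at hax2
    exact hx0 hax2.symm
  haveI : IsIso ι := (CategoryTheory.Simple.mono_isIso_iff_nonzero ι).mpr hι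
  have hsurj : Function.Surjective (q.subtype) := by
    intro y
    refine ⟨(inv ι).hom y, ?_⟩
    have h5 : (inv ι ≫ ι).hom y = (𝟙 M : M ⟶ M).hom y := by rw [IsIso.inv_hom_id]
    rw [Action.comp_hom, Action.id_hom] at h5
    exact h5
  rw [Submodule.eq_top_iff']
  intro x
  obtain ⟨z, hz⟩ := hsurj x
  rw [← hz]
  exact z.2

lemma simple_nontrivial (M : FDRep ℂ G) [CategoryTheory.Simple M] : Nontrivial M := by
  by_contra h
  rw [not_nontrivial_iff_subsingleton] at h
  apply CategoryTheory.id_nonzero M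
  apply Action.Hom.ext
  ext x
  exact @Subsingleton.elim _ h _ _

lemma exists_subgroup_char_sum (pp : ℕ) (hp : pp.Prime) (A V : Subgroup G) [A.Normal]
    (hAab : ∀ a ∈ A, ∀ b ∈ A, a * b = b * a)
    (hVp : ∀ v ∈ V, v ^ pp = 1)
    (hVab : ∀ v ∈ V, ∀ w ∈ V, v * w = w * v)
    (htop : A ⊔ V = ⊤)
    (M : FDRep ℂ G) [CategoryTheory.Simple M] :
    ∃ H : Subgroup G, ∑ h : H, M.character (h : G) = (Fintype.card H : ℂ) := by
  haveI : Nontrivial M := simple_nontrivial M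
  -- Step 1 : common eigenvector for A
  set sA : Finset G := Finset.univ.filter (· ∈ A) with hsA
  have hsA' : ∀ g : G, g ∈ sA ↔ g ∈ A := by intro g; simp [hsA]
  have hcommA : ∀ g ∈ sA, ∀ g' ∈ sA, M.ρ g * M.ρ g' = M.ρ g' * M.ρ g := by
    intro g hg g' hg'
    rw [← map_mul, ← map_mul, hAab g ((hsA' g).mp hg) g' ((hsA' g').mp hg')]
  obtain ⟨y₀, -, hy₀0, heig₀⟩ := common_eigenvector sA (fun g => M.ρ g) hcommA ⊤
    (by simp) (by intro g _ x _; trivial)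
  -- Step 2 : the character χ on A
  set χ : G → ℂ := fun g => if h : ∃ c : ℂ, M.ρ g y₀ = c • y₀ then h.choose else 1 with hχdef
  have hχ : ∀ a ∈ A, M.ρ a y₀ = χ a • y₀ := by
    intro a ha
    have h1 : ∃ c : ℂ, M.ρ a y₀ = c • y₀ := heig₀ a ((hsA' a).mpr ha)
    simp only [hχdef, dif_pos h1]
    exact h1.choose_spec
  -- Step 3 : the weight space Wχ
  set Wχ : Submodule ℂ M :=
    { carrier := {x | ∀ a ∈ A, M.ρ a x = χ a • x}
      add_mem' := by
        intro x y hx hy a ha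
        rw [map_add, hx a ha, hy a ha, smul_add]
      zero_mem' := by intro a ha; rw [map_zero, smul_zero]
      smul_mem' := by
        intro c x hx a ha
        rw [map_smul, hx a ha, smul_comm] } with hWχ
  have hy₀Wχ : y₀ ∈ Wχ := fun a ha => hχ a ha
  have hWχbot : Wχ ≠ ⊥ := by
    intro h
    rw [Submodule.eq_bot_iff] at h
    exact hy₀0 (h y₀ hy₀Wχ)
  -- Step 4 : the stabilizer V₀
  set V₀ : Subgroup G :=
    { carrier := {v | v ∈ V ∧ ∀ a ∈ A, χ (v⁻¹ * a * v) = χ a}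
      one_mem' := ⟨V.one_mem, by intro a ha; simp⟩
      mul_mem' := by
        rintro v w ⟨hvV, hv⟩ ⟨hwV, hw⟩
        refine ⟨V.mul_mem hvV hwV, ?_⟩
        intro a ha
        have h1 : (v * w)⁻¹ * a * (v * w) = w⁻¹ * (v⁻¹ * a * v) * w := by group
        rw [h1, hw _ (by
          have := ‹A.Normal›.conj_mem a ha v⁻¹
          simpa [mul_assoc] using this), hv a ha]
      inv_mem' := by
        rintro v ⟨hvV, hv⟩
        refine ⟨V.inv_mem hvV, ?_⟩
        intro a ha
        have h2 : v⁻¹ * (v * a * v⁻¹) * v = a := by group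
        have h3 := hv (v * a * v⁻¹) (by
          have := ‹A.Normal›.conj_mem a ha v
          simpa [mul_assoc] using this)
        rw [h2] at h3
        simpa [mul_assoc] using h3.symm } with hV₀def
  have hV₀V : V₀ ≤ V := fun v hv => hv.1
  have hV₀mem : ∀ v, v ∈ V₀ ↔ v ∈ V ∧ ∀ a ∈ A, χ (v⁻¹ * a * v) = χ a := fun v => Iff.rfl
  -- Step 5 : complement U of V₀ in V
  obtain ⟨U, hUV, hUV₀, hdecomp⟩ := exists_complement pp hp V hVp hVab V₀ hV₀V
  -- Step 6 : invariance of Wχ under V₀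
  have hWinv : ∀ v ∈ V₀, ∀ x ∈ Wχ, M.ρ v x ∈ Wχ := by
    intro v hv x hx a ha
    have hamem : v⁻¹ * a * v ∈ A := by
      have := ‹A.Normal›.conj_mem a ha v⁻¹
      simpa [mul_assoc] using this
    have h1 : a * v = v * (v⁻¹ * a * v) := by group
    calc M.ρ a (M.ρ v x) = M.ρ (a * v) x := by rw [map_mul]; rfl
    _ = M.ρ v (M.ρ (v⁻¹ * a * v) x) := by rw [h1, map_mul]; rfl
    _ = M.ρ v (χ (v⁻¹ * a * v) • x) := by rw [hx _ hamem]
    _ = χ (v⁻¹ * a * v) • M.ρ v x := by rw [map_smul]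
    _ = χ a • M.ρ v x := by rw [hv.2 a ha]
  -- Step 7 : common eigenvector y for V₀ inside Wχ
  set sV : Finset G := Finset.univ.filter (· ∈ V₀) with hsV
  have hsV' : ∀ g : G, g ∈ sV ↔ g ∈ V₀ := by intro g; simp [hsV]
  have hcommV : ∀ g ∈ sV, ∀ g' ∈ sV, M.ρ g * M.ρ g' = M.ρ g' * M.ρ g := by
    intro g hg g' hg'
    rw [← map_mul, ← map_mul,
      hVab g (hV₀V ((hsV' g).mp hg)) g' (hV₀V ((hsV' g').mp hg'))]
  obtain ⟨y, hyWχ, hy0, heigV⟩ := common_eigenvector sV (fun g => M.ρ g) hcommV Wχ hWχbot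
    (by intro g hg x hx; exact hWinv g ((hsV' g).mp hg) x hx)
  -- Step 8 : the family b
  set b : ↥U → M := fun u => M.ρ (u : G) y with hbdef
  have hbU : ∀ u' u : ↥U, M.ρ (u' : G) (b u) = b (u' * u) := by
    intro u' u
    rw [hbdef]
    simp only [Subgroup.coe_mul]
    rw [map_mul]
    rfl
  have hbA : ∀ a ∈ A, ∀ u : ↥U, M.ρ a (b u) = χ ((u : G)⁻¹ * a * u) • b u := by
    intro a ha u
    have hamem : (u : G)⁻¹ * a * u ∈ A := by
      have := ‹A.Normal›.conj_mem a ha (u : G)⁻¹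
      simpa [mul_assoc] using this
    have h1 : a * u = (u : G) * ((u : G)⁻¹ * a * u) := by group
    calc M.ρ a (b u) = M.ρ (a * u) y := by rw [hbdef, map_mul]; rfl
    _ = M.ρ (u : G) (M.ρ ((u : G)⁻¹ * a * u) y) := by rw [h1, map_mul]; rfl
    _ = M.ρ (u : G) (χ ((u : G)⁻¹ * a * u) • y) := by rw [hyWχ _ hamem]
    _ = χ ((u : G)⁻¹ * a * u) • b u := by rw [map_smul]
  have hb0 : ∀ u : ↥U, b u ≠ 0 := by
    intro u h0
    apply hy0
    have h5 : M.ρ ((u : G)⁻¹) (b u) = y := by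
      have h6 : M.ρ ((u : G)⁻¹) (M.ρ (u : G) y) = M.ρ ((u : G)⁻¹ * u) y := by
        rw [map_mul]; rfl
      rw [hbdef]
      show M.ρ ((u : G)⁻¹) (M.ρ (u : G) y) = y
      rw [h6, inv_mul_cancel, map_one]
      rfl
    rw [h0, map_zero] at h5
    exact h5.symm
  -- Step 9 : separation
  have hsep : ∀ u u' : ↥U, u ≠ u' →
      ∃ a ∈ A, χ ((u : G)⁻¹ * a * u) ≠ χ ((u' : G)⁻¹ * a * u') := by
    intro u u' hne
    by_contra hcon
    push_neg at hcon
    have hw : ((u' : G)⁻¹ * u) ∈ V₀ := by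
      refine ⟨V.mul_mem (V.inv_mem (hUV u'.2)) (hUV u.2), ?_⟩
      intro a ha
      have hc : (u' : G) * a * (u' : G)⁻¹ ∈ A := by
        have := ‹A.Normal›.conj_mem a ha (u' : G)
        simpa [mul_assoc] using this
      have h1 : ((u' : G)⁻¹ * u)⁻¹ * a * ((u' : G)⁻¹ * u)
          = (u : G)⁻¹ * ((u' : G) * a * (u' : G)⁻¹) * u := by group
      rw [h1, hcon _ hc]
      have h2 : (u' : G)⁻¹ * ((u' : G) * a * (u' : G)⁻¹) * u' = a := by group
      rw [h2]
    have hwU : ((u' : G)⁻¹ * u) ∈ U := U.mul_mem (U.inv_mem u'.2) u.2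
    have h7 := hUV₀ _ hwU hw
    have h3 : (u' : G) = u := inv_mul_eq_one.mp h7
    exact hne (Subtype.ext h3.symm)
  -- Step 10 : linear independence
  have key : ∀ s : Finset ↥U, ∀ c : ↥U → ℂ, (∑ u ∈ s, c u • b u = 0) → ∀ u ∈ s, c u = 0 := by
    intro s
    induction s using Finset.strongInduction with
    | _ s ih =>
      intro c hsum u₀ hu₀
      by_cases hsing : ∀ u ∈ s, u = u₀
      · have hs : s = {u₀} := Finset.eq_singleton_iff_unique_mem.mpr ⟨hu₀, hsing⟩
        rw [hs, Finset.sum_singleton] at hsum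
        exact (smul_eq_zero.mp hsum).resolve_right (hb0 u₀)
      · push_neg at hsing
        obtain ⟨u₁, hu₁s, hu₁⟩ := hsing
        obtain ⟨a, ha, hane⟩ := hsep u₀ u₁ (Ne.symm hu₁)
        set χ₁ : ℂ := χ ((u₁ : G)⁻¹ * a * u₁) with hχ₁
        have hterm : ∀ u ∈ s, (c u * (χ ((u : G)⁻¹ * a * u) - χ₁)) • b u
            = M.ρ a (c u • b u) - χ₁ • (c u • b u) := by
          intro u _
          rw [map_smul, hbA a ha u, smul_smul, smul_smul, mul_sub, sub_smul,
            mul_comm χ₁ (c u)]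
        have happ : ∑ u ∈ s, (c u * (χ ((u : G)⁻¹ * a * u) - χ₁)) • b u = 0 := by
          rw [Finset.sum_congr rfl hterm, Finset.sum_sub_distrib, ← map_sum,
            ← Finset.smul_sum, hsum, map_zero, smul_zero, sub_zero]
        have herase : ∑ u ∈ s.erase u₁, (c u * (χ ((u : G)⁻¹ * a * u) - χ₁)) • b u = 0 := by
          rw [Finset.sum_erase s (by simp [hχ₁])]
          exact happ
        have hmem01 : u₀ ∈ s.erase u₁ := Finset.mem_erase.mpr ⟨Ne.symm hu₁, hu₀⟩
        have hz := ih (s.erase u₁) (Finset.erase_ssubset hu₁s) _ herase u₀ hmem01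
        rcases mul_eq_zero.mp hz with h | h
        · exact h
        · exact absurd (sub_eq_zero.mp h) hane
  have li : LinearIndependent ℂ b :=
    linearIndependent_iff'.mpr (fun s g hg i hi => key s g hg i hi)
  -- Step 11 : spanning
  set T := Submodule.span ℂ (Set.range b) with hTdef
  have hbmem : ∀ u : ↥U, b u ∈ T := fun u => Submodule.subset_span ⟨u, rfl⟩
  have hTinv : ∀ g : G, ∀ x ∈ T, M.ρ g x ∈ T := by
    intro g
    have hgmem : g ∈ (A : Set G) * (V : Set G) := by
      rw [← Subgroup.normal_mul, htop]
      simp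
    obtain ⟨a, ha, v, hv, hav⟩ := hgmem
    obtain ⟨u', hu', w, hw, hvw⟩ := hdecomp v hv
    obtain ⟨cw, hcw⟩ := heigV w ((hsV' w).mpr hw)
    have hmain : ∀ u : ↥U, M.ρ g (b u) ∈ T := by
      intro u
      set u'' : ↥U := ⟨u', hu'⟩ * u with hu''
      have hc : g * u = a * ((u'' : G)) * w := by
        have h8 : w * u = (u : G) * w := hVab w (hV₀V hw) u (hUV u.2)
        have h9 : g * u = a * u' * (w * u) := by rw [← hav, hvw]; group
        rw [h9, h8, hu'']
        simp only [Subgroup.coe_mul]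
        group
      have h10 : M.ρ g (b u) = M.ρ (g * (u : G)) y := by
        rw [hbdef, map_mul]; rfl
      have h11 : M.ρ (g * (u : G)) y = M.ρ (a * (u'' : G)) (M.ρ w y) := by
        rw [hc, map_mul]; rfl
      have h12 : M.ρ (a * (u'' : G)) (M.ρ w y) = cw • M.ρ a (b u'') := by
        rw [hcw, map_smul, map_mul]
        rfl
      rw [h10, h11, h12, hbA a ha u'']
      exact Submodule.smul_mem _ _ (Submodule.smul_mem _ _ (hbmem u''))
    intro x hx
    refine Submodule.span_induction ?_ ?_ ?_ ?_ hx
    · rintro _ ⟨u, rfl⟩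
      exact hmain u
    · rw [map_zero]; exact T.zero_mem
    · intro x₁ x₂ _ _ h₁ h₂
      rw [map_add]; exact T.add_mem h₁ h₂
    · intro c x₁ _ h₁
      rw [map_smul]; exact T.smul_mem c h₁
  have hT0 : T ≠ ⊥ := by
    intro h
    apply hb0 1
    have := hbmem 1
    rw [h, Submodule.mem_bot] at this
    exact this
  have hTtop : T = ⊤ := simple_invariant_submodule M T hTinv hT0
  -- Step 12 : basis
  let basis : Module.Basis ↥U ℂ M := Module.Basis.mk li (by rw [← hTdef, hTtop])
  -- Step 13 : character values on U
  have hchar : ∀ h : ↥U, M.character (h : G) = if h = 1 then (Fintype.card ↥U : ℂ) else 0 := by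
    intro h
    have htr : M.character (h : G) = Matrix.trace (LinearMap.toMatrix basis basis (M.ρ (h : G))) := by
      show LinearMap.trace ℂ _ (M.ρ (h : G)) = _
      exact LinearMap.trace_eq_matrix_trace ℂ basis (M.ρ (h : G))
    have hentry : ∀ u : ↥U, (LinearMap.toMatrix basis basis (M.ρ (h : G))) u u
        = if h * u = u then (1 : ℂ) else 0 := by
      intro u
      rw [LinearMap.toMatrix_apply]
      have : M.ρ (h : G) (basis u) = basis (h * u) := by
        rw [Module.Basis.mk_apply, Module.Basis.mk_apply, hbU h u]
      rw [this, Module.Basis.repr_self, Finsupp.single_apply]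
    rw [htr, Matrix.trace]
    simp only [Matrix.diag]
    rw [Finset.sum_congr rfl (fun u _ => hentry u)]
    by_cases h1 : h = 1
    · subst h1
      simp [Finset.card_univ]
    · have hno : ∀ u : ↥U, ¬(h * u = u) := by
        intro u hc
        exact h1 (mul_eq_right.mp hc)
      rw [Finset.sum_congr rfl (fun u _ => if_neg (hno u))]
      simp [h1]
  -- Step 14 : conclusion
  refine ⟨U, ?_⟩
  rw [Finset.sum_congr rfl (fun h _ => hchar h)]
  rw [Finset.sum_ite_eq' Finset.univ (1 : ↥U) (fun _ => (Fintype.card ↥U : ℂ))]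
  simp

end Auxiliary

/-- Let `G = A ⋊ V` with `A` abelian and `V` an elementary abelian `p`-group.  Then every
irreducible complex character of `G` occurs with multiplicity exactly `1` in the
permutation character `ℂ[G/H]` for a suitable subgroup `H ≤ G`. -/
theorem irred_char_multiplicity_one_of_abelian_by_elementary
    (p : ℕ) (hp : p.Prime) (A V : Subgroup G) [A.Normal]
    (hAab : ∀ a ∈ A, ∀ b ∈ A, a * b = b * a)
    (hVp : ∀ v ∈ V, v ^ p = 1)
    (hVab : ∀ v ∈ V, ∀ w ∈ V, v * w = w * v)
    (hbot : A ⊓ V = ⊥) (htop : A ⊔ V = ⊤)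
    (τ : G → ℂ) (hτ : IsIrredChar τ) :
    ∃ H : Subgroup G, innerChar τ (permChar H) = 1 := by
  obtain ⟨M, hsim, rfl⟩ := hτ
  haveI := hsim
  obtain ⟨H, hH⟩ := exists_subgroup_char_sum p hp A V hAab hVp hVab htop M
  refine ⟨H, ?_⟩
  rw [innerChar_permChar H M.character (fun x g => FDRep.char_conj M g x)]
  rw [hH]
  have hc : (Fintype.card H : ℂ) ≠ 0 := Nat.cast_ne_zero.mpr Fintype.card_ne_zero
  field_simp
end

section
/- Let G = A ⋊ V with A abelian and V an elementary abelian p-group, and let τ be a complex irreducible character of G of dimension greater than 1, written as τ = Ind_{AU}^G χ for a subgroup U ≤ V and a 1-dimensional character χ of AU. If H ≤ V satisfies HU = V and H ∩ U = {1}, then ⟨τ, C[G/H]⟩ = 1. -/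
open scoped BigOperators
open Classical

variable {G : Type} [Group G] [Fintype G]

/-- The character of `G` induced from a character of a subgroup `K`. -/
noncomputable def indChar (K : Subgroup G) (χ : ↥K → ℂ) : G → ℂ :=
  fun g => (Fintype.card K : ℂ)⁻¹ *
    ∑ x : G, if h : x⁻¹ * g * x ∈ K then χ ⟨x⁻¹ * g * x, h⟩ else 0

set_option linter.unusedSectionVars false

lemma sup_decomp (V U H : Subgroup G) (hU : U ≤ V) (hH : H ≤ V)
    (hVab : ∀ v ∈ V, ∀ w ∈ V, v * w = w * v) :
    ∀ v ∈ H ⊔ U, ∃ h ∈ H, ∃ u ∈ U, v = h * u := by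
  intro v hv
  have hcl : H ⊔ U = Subgroup.closure ((H : Set G) ∪ U) := by
    rw [Subgroup.closure_union, Subgroup.closure_eq, Subgroup.closure_eq]
  rw [hcl] at hv
  induction hv using Subgroup.closure_induction with
  | mem x hx =>
      rcases hx with hx | hx
      · exact ⟨x, hx, 1, one_mem _, (mul_one x).symm⟩
      · exact ⟨1, one_mem _, x, hx, (one_mul x).symm⟩
  | one => exact ⟨1, one_mem _, 1, one_mem _, (one_mul 1).symm⟩
  | mul x y hx hy ihx ihy =>
      obtain ⟨h₁, hh₁, u₁, hu₁, rfl⟩ := ihx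
      obtain ⟨h₂, hh₂, u₂, hu₂, rfl⟩ := ihy
      refine ⟨h₁ * h₂, mul_mem hh₁ hh₂, u₁ * u₂, mul_mem hu₁ hu₂, ?_⟩
      have : u₁ * h₂ = h₂ * u₁ := hVab _ (hU hu₁) _ (hH hh₂)
      rw [mul_assoc, mul_assoc, ← mul_assoc u₁, this, mul_assoc]
  | inv x hx ihx =>
      obtain ⟨h, hh, u, hu, rfl⟩ := ihx
      refine ⟨h⁻¹, inv_mem hh, u⁻¹, inv_mem hu, ?_⟩
      rw [mul_inv_rev]
      exact hVab _ (hU (inv_mem hu)) _ (hH (inv_mem hh))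

/-- G = (A ⊔ U) * H -/
lemma G_decomp (A V : Subgroup G) [A.Normal]
    (hVab : ∀ v ∈ V, ∀ w ∈ V, v * w = w * v) (htop : A ⊔ V = ⊤)
    (U : Subgroup G) (hU : U ≤ V)
    (H : Subgroup G) (hH : H ≤ V) (hHU : H ⊔ U = V) :
    ∀ z : G, ∃ s ∈ A ⊔ U, ∃ h ∈ H, z = s * h := by
  intro z
  have hz : z ∈ ((A ⊔ V : Subgroup G) : Set G) := by rw [htop]; trivial
  rw [Subgroup.normal_mul] at hz
  obtain ⟨a, ha, v, hv, rfl⟩ := hz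
  obtain ⟨h, hh, u, hu, rfl⟩ := sup_decomp V U H hU hH hVab v (by rw [hHU]; exact hv)
  have hcomm : h * u = u * h := hVab _ (hH hh) _ (hU hu)
  refine ⟨a * u, mul_mem (Subgroup.mem_sup_left ha) (Subgroup.mem_sup_right hu), h, hh, ?_⟩
  rw [hcomm]; group

/-- (A ⊔ U) ∩ H is trivial -/
lemma inf_triv (A V : Subgroup G) [A.Normal]
    (hbot : A ⊓ V = ⊥)
    (U : Subgroup G) (hU : U ≤ V)
    (H : Subgroup G) (hH : H ≤ V) (hHUbot : H ⊓ U = ⊥) :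
    ∀ t : G, t ∈ A ⊔ U → t ∈ H → t = 1 := by
  intro t ht htH
  have ht' : t ∈ ((A ⊔ U : Subgroup G) : Set G) := ht
  rw [Subgroup.normal_mul] at ht'
  obtain ⟨a, ha, u, hu, rfl⟩ := ht'
  have haV : a ∈ V := by
    have : a = (a * u) * u⁻¹ := by group
    rw [this]; exact mul_mem (hH htH) (inv_mem (hU hu))
  have ha1 : a = 1 := by
    have : a ∈ A ⊓ V := ⟨ha, haV⟩
    rwa [hbot, Subgroup.mem_bot] at this
  subst ha1
  have htH' : u ∈ H := by simpa using htH
  have : u ∈ H ⊓ U := ⟨htH', hu⟩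
  rw [hHUbot, Subgroup.mem_bot] at this
  simpa using this

/-- key conjugation lemma -/
lemma conj_triv (A V : Subgroup G) [A.Normal]
    (hVab : ∀ v ∈ V, ∀ w ∈ V, v * w = w * v)
    (hbot : A ⊓ V = ⊥) (htop : A ⊔ V = ⊤)
    (U : Subgroup G) (hU : U ≤ V)
    (H : Subgroup G) (hH : H ≤ V) (hHU : H ⊔ U = V) (hHUbot : H ⊓ U = ⊥) :
    ∀ z g : G, g ∈ A ⊔ U → z⁻¹ * g * z ∈ H → g = 1 := by
  intro z g hg hzg
  obtain ⟨s, hs, h, hh, rfl⟩ := G_decomp A V hVab htop U hU H hH hHU z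
  have hsgs : s⁻¹ * g * s ∈ A ⊔ U := mul_mem (mul_mem (inv_mem hs) hg) hs
  have hin : s⁻¹ * g * s ∈ H := by
    have : s⁻¹ * g * s = h * ((s * h)⁻¹ * g * (s * h)) * h⁻¹ := by group
    rw [this]
    exact mul_mem (mul_mem hh hzg) (inv_mem hh)
  have := inf_triv A V hbot U hU H hH hHUbot _ hsgs hin
  have hg1 : g = s * 1 * s⁻¹ := by rw [← this]; group
  simpa using hg1

/-- card G = card (A⊔U) * card H -/
lemma card_eq (A V : Subgroup G) [A.Normal]
    (hVab : ∀ v ∈ V, ∀ w ∈ V, v * w = w * v)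
    (hbot : A ⊓ V = ⊥) (htop : A ⊔ V = ⊤)
    (U : Subgroup G) (hU : U ≤ V)
    (H : Subgroup G) (hH : H ≤ V) (hHU : H ⊔ U = V) (hHUbot : H ⊓ U = ⊥) :
    Fintype.card G = Fintype.card (A ⊔ U : Subgroup G) * Fintype.card H := by
  rw [← Fintype.card_prod]
  apply (Fintype.card_of_bijective (f := fun p : (A ⊔ U : Subgroup G) × H => (p.1 : G) * p.2) ⟨?_, ?_⟩).symm
  · rintro ⟨⟨s, hs⟩, ⟨h, hh⟩⟩ ⟨⟨s', hs'⟩, ⟨h', hh'⟩⟩ heq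
    simp only at heq
    simp only [Prod.mk.injEq, Subtype.mk.injEq]
    have key : s'⁻¹ * s = h' * h⁻¹ := by
      calc s'⁻¹ * s = s'⁻¹ * (s * h) * h⁻¹ := by group
      _ = s'⁻¹ * (s' * h') * h⁻¹ := by rw [heq]
      _ = h' * h⁻¹ := by group
    have h1 : s'⁻¹ * s ∈ A ⊔ U := mul_mem (inv_mem hs') hs
    have h2 : s'⁻¹ * s ∈ H := by rw [key]; exact mul_mem hh' (inv_mem hh)
    have t1 := inf_triv A V hbot U hU H hH hHUbot _ h1 h2
    have hss : s = s' := by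
      have hx : s = s' * (s'⁻¹ * s) := by group
      rw [t1, mul_one] at hx; exact hx
    refine ⟨hss, ?_⟩
    rw [hss] at heq; exact mul_left_cancel heq
  · intro z
    obtain ⟨s, hs, h, hh, rfl⟩ := G_decomp A V hVab htop U hU H hH hHU z
    exact ⟨(⟨s, hs⟩, ⟨h, hh⟩), rfl⟩


/-- Let `G = A ⋊ V` with `A` abelian and `V` an elementary abelian `p`-group, and let
`τ = Ind_{AU}^G χ` be an irreducible character of `G` of dimension `> 1`, with `U ≤ V` and
`χ` a 1-dimensional character of `AU`.  If `H ≤ V` satisfies `HU = V` and `H ∩ U = 1`,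
then `⟨τ, ℂ[G/H]⟩ = 1`. -/
theorem induced_char_multiplicity_one
    (p : ℕ) (hp : p.Prime) (A V : Subgroup G) [A.Normal]
    (hAab : ∀ a ∈ A, ∀ b ∈ A, a * b = b * a)
    (hVp : ∀ v ∈ V, v ^ p = 1)
    (hVab : ∀ v ∈ V, ∀ w ∈ V, v * w = w * v)
    (hbot : A ⊓ V = ⊥) (htop : A ⊔ V = ⊤)
    (U : Subgroup G) (hU : U ≤ V)
    (χ : ↥(A ⊔ U) →* ℂˣ)
    (τ : G → ℂ) (hτirr : IsIrredChar τ) (hdim : 1 < (τ 1).re)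
    (hτ : τ = indChar (A ⊔ U) (fun x => (χ x : ℂ)))
    (H : Subgroup G) (hH : H ≤ V) (hHU : H ⊔ U = V) (hHUbot : H ⊓ U = ⊥) :
    innerChar τ (permChar H) = 1 := by
  classical
  have L1 := conj_triv A V hVab hbot htop U hU H hH hHU hHUbot
  have Lcard := card_eq A V hVab hbot htop U hU H hH hHU hHUbot
  -- τ vanishes on conjugates of nontrivial elements of H
  have hτ0 : ∀ (y h : G), h ∈ H → h ≠ 1 → τ (y * h * y⁻¹) = 0 := by
    intro y h hh hne
    rw [hτ]; unfold indChar
    rw [mul_eq_zero]; right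
    apply Finset.sum_eq_zero
    intro z _
    rw [dif_neg]
    intro m
    apply hne
    have hmemH : (z⁻¹ * y)⁻¹ * (z⁻¹ * (y * h * y⁻¹) * z) * (z⁻¹ * y) ∈ H := by
      have hc : (z⁻¹ * y)⁻¹ * (z⁻¹ * (y * h * y⁻¹) * z) * (z⁻¹ * y) = h := by group
      rw [hc]; exact hh
    have hg := L1 (z⁻¹ * y) (z⁻¹ * (y * h * y⁻¹) * z) m hmemH
    have hh1 : h = y⁻¹ * z * (z⁻¹ * (y * h * y⁻¹) * z) * z⁻¹ * y := by group
    rw [hh1, hg]; group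
  -- value of τ at 1
  have hτ1 : τ 1 = (Fintype.card G : ℂ) * (Fintype.card (A ⊔ U : Subgroup G) : ℂ)⁻¹ := by
    rw [hτ]; unfold indChar
    have hsum : (∑ z : G, if h : z⁻¹ * 1 * z ∈ (A ⊔ U : Subgroup G) then
        ((χ ⟨z⁻¹ * 1 * z, h⟩ : ℂˣ) : ℂ) else 0) = (Fintype.card G : ℂ) := by
      have hterm : ∀ z : G, (if h : z⁻¹ * 1 * z ∈ (A ⊔ U : Subgroup G) then
          ((χ ⟨z⁻¹ * 1 * z, h⟩ : ℂˣ) : ℂ) else 0) = 1 := by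
        intro z
        have hz1 : z⁻¹ * 1 * z = 1 := by group
        have hmem : z⁻¹ * 1 * z ∈ (A ⊔ U : Subgroup G) := by rw [hz1]; exact one_mem _
        rw [dif_pos hmem]
        have he : (⟨z⁻¹ * 1 * z, hmem⟩ : (A ⊔ U : Subgroup G)) = 1 := by
          ext; exact hz1
        rw [he, map_one, Units.val_one]
      simp only [hterm]
      simp
    rw [hsum, mul_comm]
  -- fixed point condition
  have hfix : ∀ (g : G) (x : G ⧸ H), (g • x = x) ↔ (x.out)⁻¹ * g * x.out ∈ H := by
    intro g x
    conv_lhs => rw [← QuotientGroup.out_eq' x, MulAction.Quotient.smul_mk, QuotientGroup.eq,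
      smul_eq_mul]
    constructor
    · intro hmem
      have hc : x.out⁻¹ * g * x.out = ((g * x.out)⁻¹ * x.out)⁻¹ := by group
      rw [hc]; exact inv_mem hmem
    · intro hmem
      have hc : (g * x.out)⁻¹ * x.out = (x.out⁻¹ * g * x.out)⁻¹ := by group
      rw [hc]; exact inv_mem hmem
  unfold innerChar permChar
  have hconj : ∀ g : G, (starRingEnd ℂ) ((Fintype.card {x : G ⧸ H // g • x = x} : ℂ))
      = (Fintype.card {x : G ⧸ H // g • x = x} : ℂ) := fun g => by rw [map_natCast]
  simp only [hconj]
  have hcardsum : ∀ g : G, (Fintype.card {x : G ⧸ H // g • x = x} : ℂ)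
      = ∑ x : G ⧸ H, if g • x = x then (1 : ℂ) else 0 := by
    intro g
    rw [Fintype.card_subtype, Finset.card_filter]
    push_cast
    rfl
  simp only [hcardsum]
  have step1 : ∀ g : G, τ g * ∑ x : G ⧸ H, (if g • x = x then (1:ℂ) else 0)
      = ∑ x : G ⧸ H, (if g • x = x then τ g else 0) := by
    intro g; rw [Finset.mul_sum]; apply Finset.sum_congr rfl; intro x _
    by_cases hx : g • x = x <;> simp [hx]
  simp only [step1]
  rw [Finset.sum_comm]
  have step2 : ∀ x : G ⧸ H, (∑ g : G, if g • x = x then τ g else 0)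
      = (Fintype.card G : ℂ) * (Fintype.card (A ⊔ U : Subgroup G) : ℂ)⁻¹ := by
    intro x
    have hcond : ∀ g : G, (g • x = x) = ((x.out)⁻¹ * g * x.out ∈ H) :=
      fun g => propext (hfix g x)
    simp only [hcond]
    rw [← Equiv.sum_comp ((Equiv.mulLeft x.out).trans (Equiv.mulRight x.out⁻¹))
      (fun g => if (x.out)⁻¹ * g * x.out ∈ H then τ g else 0)]
    simp only [Equiv.trans_apply, Equiv.coe_mulLeft, Equiv.coe_mulRight]
    have heval : ∀ g : G, (if x.out⁻¹ * (x.out * g * x.out⁻¹) * x.out ∈ H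
          then τ (x.out * g * x.out⁻¹) else 0)
        = (if g = 1 then (Fintype.card G : ℂ) * (Fintype.card (A ⊔ U : Subgroup G) : ℂ)⁻¹
          else 0) := by
      intro g
      have hcg : x.out⁻¹ * (x.out * g * x.out⁻¹) * x.out = g := by group
      rw [hcg]
      by_cases hg1 : g = 1
      · subst hg1
        rw [if_pos (one_mem H), if_pos rfl]
        have h1 : x.out * 1 * x.out⁻¹ = (1 : G) := by group
        rw [h1, hτ1]
      · rw [if_neg hg1]
        by_cases hgH : g ∈ H
        · rw [if_pos hgH, hτ0 x.out g hgH hg1]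
        · rw [if_neg hgH]
    refine (Finset.sum_congr rfl (fun g _ => heval g)).trans ?_
    simp
  simp only [step2]
  rw [Finset.sum_const, Finset.card_univ, nsmul_eq_mul]
  have hlag : Fintype.card G = Fintype.card (G ⧸ H) * Fintype.card H := by
    rw [← Nat.card_eq_fintype_card, ← Nat.card_eq_fintype_card, ← Nat.card_eq_fintype_card]
    exact Subgroup.card_eq_card_quotient_mul_card_subgroup H
  have hQK : Fintype.card (G ⧸ H) = Fintype.card (A ⊔ U : Subgroup G) :=
    Nat.eq_of_mul_eq_mul_right Fintype.card_pos (hlag.symm.trans Lcard)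
  rw [hQK]
  have hG : (Fintype.card G : ℂ) ≠ 0 := Nat.cast_ne_zero.mpr Fintype.card_ne_zero
  have hK : (Fintype.card (A ⊔ U : Subgroup G) : ℂ) ≠ 0 :=
    Nat.cast_ne_zero.mpr Fintype.card_ne_zero
  field_simp
end
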